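/- Let K ≥ 2 be an integer and P ∈ (0,1]. The function f with f(x) = ((P - x)/x)(1 - (1-x)^K) for x ∈ (0,P] and f(0) = KP is strictly convex and monotonically decreasing on [0,P]. -/

import Mathlib

theorem stmt_16 (K : ℕ) (hK : 2 ≤ K) (P : ℝ) (hP : P ∈ Set.Ioc (0 : ℝ) 1) :
    StrictConvexOn ℝ (Set.Icc (0 : ℝ) P)
      (fun x : ℝ => if x = 0 then (K : ℝ) * P else ((P - x) / x) * (1 - (1 - x) ^ K))
    ∧ AntitoneOn
        (fun x : ℝ => if x = 0 then (K : ℝ) * P else ((P - x) / x) * (1 - (1 - x) ^ K))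
        (Set.Icc (0 : ℝ) P) := by
  obtain ⟨hP0, hP1⟩ := hP
  set S : ℝ → ℝ := fun x => ∑ i ∈ Finset.range K, (1 - x) ^ i with hSdef
  set D1 : ℝ → ℝ := fun x => ∑ i ∈ Finset.range K, (i : ℝ) * (1 - x) ^ (i - 1) * (-1)
    with hD1def
  set D2 : ℝ → ℝ := fun x =>
    ∑ i ∈ Finset.range K, (i : ℝ) * (((i - 1 : ℕ) : ℝ) * (1 - x) ^ (i - 1 - 1) * (-1)) * (-1)
    with hD2def
  set g : ℝ → ℝ := fun x => (P - x) * S x with hgdef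
  have heq : ∀ x : ℝ,
      (if x = 0 then (K : ℝ) * P else ((P - x) / x) * (1 - (1 - x) ^ K)) = g x := by
    intro x
    by_cases h : x = 0
    · simp [h, hgdef, hSdef, mul_comm]
    · rw [if_neg h]
      have key : S x * x = 1 - (1 - x) ^ K := by
        have h2 := geom_sum_mul (1 - x) K
        simp only [hSdef]
        nlinarith [h2]
      have : ((P - x) / x) * (1 - (1 - x) ^ K) = ((P - x) / x) * (S x * x) := by rw [key]
      rw [this, hgdef]
      field_simp
  -- derivatives
  have hlin : ∀ x : ℝ, HasDerivAt (fun y : ℝ => 1 - y) (-1) x := fun x =>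
    (hasDerivAt_id x).const_sub 1
  have hS : ∀ x : ℝ, HasDerivAt S (D1 x) x := by
    intro x
    apply HasDerivAt.fun_sum
    intro i _
    exact (hlin x).pow i
  have hD1 : ∀ x : ℝ, HasDerivAt D1 (D2 x) x := by
    intro x
    apply HasDerivAt.fun_sum
    intro i _
    exact (((hlin x).pow (i - 1)).const_mul (i : ℝ)).mul_const (-1)
  have hPx : ∀ x : ℝ, HasDerivAt (fun y : ℝ => P - y) (-1) x := fun x =>
    (hasDerivAt_id x).const_sub P
  have hg : ∀ x : ℝ, HasDerivAt g (-1 * S x + (P - x) * D1 x) x := by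
    intro x
    exact (hPx x).mul (hS x)
  have hg' : ∀ x : ℝ,
      HasDerivAt (fun y => -1 * S y + (P - y) * D1 y)
        (-1 * D1 x + (-1 * D1 x + (P - x) * D2 x)) x := by
    intro x
    exact ((hS x).const_mul (-1)).add ((hPx x).mul (hD1 x))
  have hderiv : deriv g = fun x => -1 * S x + (P - x) * D1 x := by
    funext x; exact (hg x).deriv
  have hderiv2 : deriv (deriv g) = fun x => -1 * D1 x + (-1 * D1 x + (P - x) * D2 x) := by
    rw [hderiv]; funext x; exact (hg' x).deriv
  have hcont : ContinuousOn g (Set.Icc 0 P) :=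
    (fun x _ => ((hg x).differentiableAt.continuousAt).continuousWithinAt)
  -- sign facts
  have hD1nonpos : ∀ x ∈ Set.Icc (0:ℝ) P, D1 x ≤ 0 := by
    intro x hx
    apply Finset.sum_nonpos
    intro i _
    have h1x : (0:ℝ) ≤ 1 - x := by
      have := hx.2; linarith
    nlinarith [pow_nonneg h1x (i - 1), Nat.cast_nonneg (α := ℝ) i]
  have hD1lt : ∀ x ∈ Set.Icc (0:ℝ) P, D1 x ≤ -1 := by
    intro x hx
    have h1x : (0:ℝ) ≤ 1 - x := by have := hx.2; linarith
    have hT : D1 x = -∑ i ∈ Finset.range K, (i:ℝ) * (1 - x) ^ (i - 1) := by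
      simp only [hD1def]
      rw [← Finset.sum_neg_distrib]
      apply Finset.sum_congr rfl
      intro i _; ring
    have hmem : 1 ∈ Finset.range K := Finset.mem_range.2 (by omega)
    have hone : ((1:ℕ):ℝ) * (1 - x) ^ (1 - 1) ≤
        ∑ i ∈ Finset.range K, (i:ℝ) * (1 - x) ^ (i - 1) :=
      Finset.single_le_sum (f := fun (i : ℕ) => (i:ℝ) * (1 - x) ^ (i - 1))
        (fun i _ => by positivity) hmem
    norm_num at hone
    rw [hT]; linarith
  have hD2nonneg : ∀ x ∈ Set.Icc (0:ℝ) P, 0 ≤ D2 x := by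
    intro x hx
    apply Finset.sum_nonneg
    intro i _
    have h1x : (0:ℝ) ≤ 1 - x := by have := hx.2; linarith
    have heq2 : (i:ℝ) * (((i - 1 : ℕ) : ℝ) * (1 - x) ^ (i - 1 - 1) * (-1)) * (-1)
        = (i:ℝ) * ((i - 1 : ℕ) : ℝ) * (1 - x) ^ (i - 1 - 1) := by ring
    rw [heq2]
    positivity
  have hSpos : ∀ x ∈ Set.Icc (0:ℝ) P, 1 ≤ S x := by
    intro x hx
    have h1x : (0:ℝ) ≤ 1 - x := by have := hx.2; linarith
    have hmem : 0 ∈ Finset.range K := Finset.mem_range.2 (by omega)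
    have := Finset.single_le_sum (f := fun i => (1 - x) ^ i)
      (fun i _ => pow_nonneg h1x i) hmem
    simpa using this
  have hint : interior (Set.Icc (0:ℝ) P) = Set.Ioo 0 P := interior_Icc
  -- strict convexity of g
  have hconv : StrictConvexOn ℝ (Set.Icc (0:ℝ) P) g := by
    apply strictConvexOn_of_deriv2_pos (convex_Icc 0 P) hcont
    intro x hx
    rw [hint] at hx
    have hx' : x ∈ Set.Icc (0:ℝ) P := ⟨hx.1.le, hx.2.le⟩
    show 0 < deriv (deriv g) x
    rw [hderiv2]
    show 0 < -1 * D1 x + (-1 * D1 x + (P - x) * D2 x)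
    have h1 := hD1lt x hx'
    have h2 := hD2nonneg x hx'
    have h3 : 0 < P - x := by linarith [hx.2]
    have h4 : 0 ≤ (P - x) * D2 x := mul_nonneg h3.le h2
    linarith
  -- antitone of g
  have hanti : AntitoneOn g (Set.Icc (0:ℝ) P) := by
    apply antitoneOn_of_deriv_nonpos (convex_Icc 0 P) hcont
    · intro x hx
      exact (hg x).differentiableAt.differentiableWithinAt
    · intro x hx
      rw [hint] at hx
      have hx' : x ∈ Set.Icc (0:ℝ) P := ⟨hx.1.le, hx.2.le⟩
      rw [hderiv]
      show -1 * S x + (P - x) * D1 x ≤ 0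
      have h1 := hSpos x hx'
      have h2 := hD1nonpos x hx'
      have h3 : 0 ≤ P - x := by linarith [hx.2]
      have h4 : (P - x) * D1 x ≤ 0 := mul_nonpos_of_nonneg_of_nonpos h3 h2
      linarith
  constructor
  · refine ⟨convex_Icc 0 P, ?_⟩
    intro x hx y hy hxy a b ha hb hab
    have hmem : a • x + b • y ∈ Set.Icc (0:ℝ) P :=
      (convex_Icc 0 P) hx hy ha.le hb.le hab
    simp only [heq x, heq y, heq (a • x + b • y)]
    exact hconv.2 hx hy hxy ha hb hab
  · intro x hx y hy hxy
    simp only [heq x, heq y]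
    exact hanti hx hy hxy
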